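/- Let V(x) = x⁴/4 − x²/2 and Z_ε = ∫_ℝ e^{−V(x)/ε} dx. Then there exist constants 0 < c ≤ C and ε₀ > 0 such that for all 0 < ε < ε₀: c √ε e^{1/(4ε)} ≤ Z_ε ≤ C √ε e^{1/(4ε)}. -/

import Mathlib

open Real MeasureTheory

set_option maxHeartbeats 1000000

/-- Laplace asymptotics for the partition function Z_ε. -/
theorem stmt14 (V : ℝ → ℝ) (hV : ∀ x : ℝ, V x = x ^ 4 / 4 - x ^ 2 / 2) :
    ∃ c C ε₀ : ℝ, 0 < c ∧ c ≤ C ∧ 0 < ε₀ ∧ ∀ ε : ℝ, 0 < ε → ε < ε₀ →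
      c * Real.sqrt ε * Real.exp (1 / (4 * ε)) ≤ (∫ x : ℝ, Real.exp (-(V x) / ε)) ∧
      (∫ x : ℝ, Real.exp (-(V x) / ε)) ≤ C * Real.sqrt ε * Real.exp (1 / (4 * ε)) := by
  refine ⟨Real.exp (-(9/4)), 4 * Real.sqrt π, 1, Real.exp_pos _, ?_, one_pos, ?_⟩
  · have h1 : (1:ℝ) ≤ Real.sqrt π := by
      rw [show (1:ℝ) = Real.sqrt 1 by simp]
      exact Real.sqrt_le_sqrt (by linarith [Real.pi_gt_three])
    have h2 : Real.exp (-(9/4)) ≤ 1 := Real.exp_le_one_iff.mpr (by norm_num)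
    linarith
  intro ε hε hε1
  set b : ℝ := 1 / (4 * ε) with hbdef
  have hb : 0 < b := by positivity
  set f : ℝ → ℝ := fun x => Real.exp (-b * (x ^ 2 - 1) ^ 2) with hfdef
  set g₁ : ℝ → ℝ := fun x => Real.exp (-b * (x - 1) ^ 2) with hg1def
  set g₂ : ℝ → ℝ := fun x => Real.exp (-b * (x + 1) ^ 2) with hg2def
  have hg₁ : Integrable g₁ := (integrable_exp_neg_mul_sq hb).comp_sub_right 1
  have hg₂ : Integrable g₂ := by
    have := (integrable_exp_neg_mul_sq hb).comp_sub_right (-1)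
    simpa [hg2def, sub_neg_eq_add, neg_mul] using this
  -- pointwise bound f ≤ g₁ + g₂
  have hpt : ∀ x : ℝ, f x ≤ g₁ x + g₂ x := by
    intro x
    rcases le_total 0 x with hx | hx
    · have : f x ≤ g₁ x := by
        apply Real.exp_le_exp.mpr
        have h : (x - 1) ^ 2 ≤ (x ^ 2 - 1) ^ 2 := by nlinarith [sq_nonneg (x - 1)]
        nlinarith [hb]
      linarith [Real.exp_pos (-b * (x + 1) ^ 2)]
    · have : f x ≤ g₂ x := by
        apply Real.exp_le_exp.mpr
        have h : (x + 1) ^ 2 ≤ (x ^ 2 - 1) ^ 2 := by nlinarith [sq_nonneg (x + 1)]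
        nlinarith [hb]
      linarith [Real.exp_pos (-b * (x - 1) ^ 2)]
  have hfint : Integrable f := by
    refine (hg₁.add hg₂).mono ?_ ?_
    · exact (Real.continuous_exp.comp (by continuity)).aestronglyMeasurable
    · filter_upwards with x
      rw [Real.norm_eq_abs, Real.norm_eq_abs, Pi.add_apply,
        abs_of_nonneg (Real.exp_pos _).le,
        abs_of_nonneg (add_nonneg (Real.exp_pos _).le (Real.exp_pos _).le)]
      exact hpt x
  -- rewrite the integrand
  have hrw : (∫ x : ℝ, Real.exp (-(V x) / ε)) = Real.exp (1 / (4 * ε)) * ∫ x, f x := by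
    rw [← integral_const_mul]
    congr 1; funext x
    rw [← Real.exp_add]
    congr 1
    rw [hV x, hbdef]
    field_simp
    ring
  -- upper bound on ∫ f
  have hintg : (∫ x, g₁ x) = Real.sqrt π * Real.sqrt (4 * ε) := by
    rw [hg1def]
    rw [show (∫ x : ℝ, Real.exp (-b * (x - 1) ^ 2))
        = ∫ x : ℝ, Real.exp (-b * x ^ 2) from
      integral_sub_right_eq_self (fun x => Real.exp (-b * x ^ 2)) 1]
    rw [integral_gaussian]
    rw [show π / b = π * (4 * ε) by rw [hbdef]; field_simp]
    rw [Real.sqrt_mul Real.pi_pos.le]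
  have hintg₂ : (∫ x, g₂ x) = Real.sqrt π * Real.sqrt (4 * ε) := by
    rw [hg2def]
    rw [show (∫ x : ℝ, Real.exp (-b * (x + 1) ^ 2))
        = ∫ x : ℝ, Real.exp (-b * x ^ 2) by
      rw [show (fun x : ℝ => Real.exp (-b * (x + 1) ^ 2))
          = fun x : ℝ => Real.exp (-b * (x - (-1)) ^ 2) by funext x; ring_nf]
      exact integral_sub_right_eq_self (fun x => Real.exp (-b * x ^ 2)) (-1)]
    rw [integral_gaussian]
    rw [show π / b = π * (4 * ε) by rw [hbdef]; field_simp]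
    rw [Real.sqrt_mul Real.pi_pos.le]
  have hupper : (∫ x, f x) ≤ 4 * Real.sqrt π * Real.sqrt ε := by
    have h := integral_mono hfint (hg₁.add hg₂) hpt
    simp only [Pi.add_apply] at h
    rw [integral_add hg₁ hg₂, hintg, hintg₂] at h
    have h4 : Real.sqrt (4 * ε) = 2 * Real.sqrt ε := by
      rw [show (4 : ℝ) * ε = 2 ^ 2 * ε by ring, Real.sqrt_mul (by positivity),
        Real.sqrt_sq (by norm_num)]
    rw [h4] at h
    linarith
  -- lower bound on ∫ f
  have hsq : Real.sqrt ε ≤ 1 := by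
    rw [show (1:ℝ) = Real.sqrt 1 by simp]
    exact Real.sqrt_le_sqrt hε1.le
  have hsqε : Real.sqrt ε ^ 2 = ε := Real.sq_sqrt hε.le
  have hlow : Real.exp (-(9/4)) * Real.sqrt ε ≤ ∫ x, f x := by
    have hmeas : MeasurableSet (Set.Icc (1:ℝ) (1 + Real.sqrt ε)) := measurableSet_Icc
    have hvol : (volume (Set.Icc (1:ℝ) (1 + Real.sqrt ε))).toReal = Real.sqrt ε := by
      rw [Real.volume_Icc, show 1 + Real.sqrt ε - 1 = Real.sqrt ε by ring,
        ENNReal.toReal_ofReal (Real.sqrt_nonneg ε)]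
    have hc : ∀ x ∈ Set.Icc (1:ℝ) (1 + Real.sqrt ε), Real.exp (-(9/4)) ≤ f x := by
      intro x hx
      obtain ⟨hx1, hx2⟩ := hx
      apply Real.exp_le_exp.mpr
      have ha : (x - 1) ^ 2 ≤ ε := by nlinarith [Real.sqrt_nonneg ε]
      have hb2 : (x + 1) ^ 2 ≤ 9 := by nlinarith [Real.sqrt_nonneg ε]
      have h1 : (x ^ 2 - 1) ^ 2 ≤ 9 * ε := by
        have := mul_le_mul ha hb2 (sq_nonneg _) hε.le
        nlinarith [this]
      have : -b * (x ^ 2 - 1) ^ 2 ≥ -b * (9 * ε) := by nlinarith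
      have hbe : b * (9 * ε) = 9 / 4 := by rw [hbdef]; field_simp
      nlinarith
    have h := setIntegral_ge_of_const_le hmeas (by rw [Real.volume_Icc]; exact ENNReal.ofReal_ne_top) hc hfint.integrableOn
    rw [Measure.real, hvol, smul_eq_mul] at h
    have h2 : (∫ x in Set.Icc (1:ℝ) (1 + Real.sqrt ε), f x) ≤ ∫ x, f x :=
      setIntegral_le_integral hfint (by filter_upwards with x using (Real.exp_pos _).le)
    linarith
  constructor
  · calc Real.exp (-(9/4)) * Real.sqrt ε * Real.exp (1 / (4 * ε))
        = Real.exp (1 / (4 * ε)) * (Real.exp (-(9/4)) * Real.sqrt ε) := by ring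
      _ ≤ Real.exp (1 / (4 * ε)) * ∫ x, f x := by
          exact mul_le_mul_of_nonneg_left hlow (Real.exp_pos _).le
      _ = ∫ x : ℝ, Real.exp (-(V x) / ε) := hrw.symm
  · calc (∫ x : ℝ, Real.exp (-(V x) / ε))
        = Real.exp (1 / (4 * ε)) * ∫ x, f x := hrw
      _ ≤ Real.exp (1 / (4 * ε)) * (4 * Real.sqrt π * Real.sqrt ε) :=
          mul_le_mul_of_nonneg_left hupper (Real.exp_pos _).le
      _ = 4 * Real.sqrt π * Real.sqrt ε * Real.exp (1 / (4 * ε)) := by ring
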